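/- Let 0 < θ < 1, let 𝒦 be a set of multiindices, and let c_k > 0 for k ∈ 𝒦 satisfy inf_{k∈𝒦} c_k θ^{‖k‖} > 0 and sup_{k∈𝒦} c_k σ^k < ∞ for all sequences σ with 0 ≤ σ_n < 1, σ_n → 0. Then sup_{k∈𝒦} c_k σ^k < ∞ also holds for all sequences σ with σ_n ≥ 0, σ_n → 0 (without the restriction σ_n < 1). -/
import Mathlib


open Filter
open scoped BigOperators

/-- Let `0 < θ < 1`, `𝒦` a set of multiindices, and `c_k > 0` for `k ∈ 𝒦` with
`inf_{k∈𝒦} c_k θ^{‖k‖} > 0` and `sup_{k∈𝒦} c_k σ^k < ∞` for all `σ ∈ S₁`. Then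
`sup_{k∈𝒦} c_k σ^k < ∞` for all `σ ∈ S` (only `σ_n ≥ 0`, `σ_n → 0`). -/
theorem sup_extends_to_S (θ : ℝ) (hθ0 : 0 < θ) (hθ1 : θ < 1)
    (𝒦 : Set (ℕ →₀ ℕ)) (c : (ℕ →₀ ℕ) → ℝ) (hc : ∀ k ∈ 𝒦, 0 < c k)
    (hinf : ∃ δ : ℝ, 0 < δ ∧ ∀ k ∈ 𝒦, δ ≤ c k * θ ^ (k.sum fun _ v => v : ℕ))
    (hsup : ∀ σ : ℕ → ℝ, (∀ n, 0 ≤ σ n ∧ σ n < 1) → Tendsto σ atTop (nhds 0) →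
      BddAbove ((fun k : ℕ →₀ ℕ => c k * ∏ n ∈ k.support, σ n ^ k n) '' 𝒦)) :
    ∀ σ : ℕ → ℝ, (∀ n, 0 ≤ σ n) → Tendsto σ atTop (nhds 0) →
      BddAbove ((fun k : ℕ →₀ ℕ => c k * ∏ n ∈ k.support, σ n ^ k n) '' 𝒦) := by
  obtain ⟨δ, hδ0, hδle⟩ := hinf
  intro σ hσ0 hσtend
  obtain ⟨M0, hM0⟩ := hσtend.bddAbove_range
  set M : ℝ := max M0 1 with hMdef
  have hM1 : (1:ℝ) ≤ M := le_max_right _ _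
  have hMpos : (0:ℝ) < M := lt_of_lt_of_le one_pos hM1
  have hσM : ∀ n, σ n ≤ M := fun n => le_trans (hM0 ⟨n, rfl⟩) (le_max_left _ _)
  set r : ℝ := M / θ with hrdef
  have hr1 : 1 < r := by
    rw [hrdef, lt_div_iff₀ hθ0]; nlinarith
  have hr0 : (0:ℝ) < r := lt_trans one_pos hr1
  set τ : ℕ → ℝ := fun n => σ n / r with hτdef
  have hτ0 : ∀ n, 0 ≤ τ n := fun n => div_nonneg (hσ0 n) hr0.le
  have hτθ : ∀ n, τ n ≤ θ := by
    intro n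
    rw [hτdef]
    rw [div_le_iff₀ hr0, hrdef]
    rw [mul_div_assoc', mul_comm, mul_div_assoc, div_self hθ0.ne', mul_one]
    exact hσM n
  have hστ : ∀ n, σ n = τ n * r := fun n => (div_mul_cancel₀ _ hr0.ne').symm
  have hτtend : Tendsto τ atTop (nhds 0) := by
    simpa using hσtend.div_const r
  set α : ℝ := Real.logb (1/θ) r with hαdef
  have hb1 : 1 < 1/θ := one_lt_one_div hθ0 hθ1
  have hα0 : 0 ≤ α := Real.logb_nonneg hb1 hr1.le
  have hrα : ((1:ℝ)/θ) ^ α = r := Real.rpow_logb (by positivity) (ne_of_gt hb1) hr0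
  have h1α : (0:ℝ) < 1 + α := by linarith
  set β : ℝ := 1/(1+α) with hβdef
  have hβpos : 0 < β := by positivity
  set τ' : ℕ → ℝ := fun n => τ n ^ β with hτ'def
  have hτ'cond : ∀ n, 0 ≤ τ' n ∧ τ' n < 1 := by
    intro n
    refine ⟨Real.rpow_nonneg (hτ0 n) β, ?_⟩
    exact Real.rpow_lt_one (hτ0 n) (lt_of_le_of_lt (hτθ n) hθ1) hβpos
  have hτ'tend : Tendsto τ' atTop (nhds 0) := by
    have := hτtend.rpow_const (p := β) (Or.inr hβpos.le)
    simpa [Real.zero_rpow hβpos.ne'] using this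
  obtain ⟨B, hB⟩ := hsup τ' hτ'cond hτ'tend
  set B' : ℝ := max B 1 with hB'def
  have hB'1 : (1:ℝ) ≤ B' := le_max_right _ _
  have hB'0 : (0:ℝ) ≤ B' := le_trans zero_le_one hB'1
  refine ⟨(1/δ) ^ α * B' ^ (1+α), ?_⟩
  rintro x ⟨k, hk, rfl⟩
  simp only
  set m : ℕ := k.sum fun _ v => v with hmdef
  have hmsum : m = ∑ n ∈ k.support, k n := rfl
  set P : ℝ := ∏ n ∈ k.support, τ n ^ k n with hPdef
  have hP0 : 0 ≤ P := Finset.prod_nonneg fun n _ => pow_nonneg (hτ0 n) _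
  have hck : 0 < c k := hc k hk
  -- step 1 : ∏ σ^k = P * r^m
  have hstep1 : (∏ n ∈ k.support, σ n ^ k n) = P * r ^ m := by
    rw [hPdef, hmsum, ← Finset.prod_pow_eq_pow_sum, ← Finset.prod_mul_distrib]
    exact Finset.prod_congr rfl fun n _ => by rw [hστ n, mul_pow]
  -- step 2 : r^m ≤ (c k / δ)^α
  have hθm : δ / c k ≤ θ ^ m := by
    rw [div_le_iff₀ hck, mul_comm]; exact hδle k hk
  have hinv : ((1:ℝ)/θ) ^ m ≤ c k / δ := by
    have h1 : (0:ℝ) < δ / c k := by positivity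
    have h2 := one_div_le_one_div_of_le h1 hθm
    rw [one_div_div] at h2
    rwa [one_div_pow]
  have hstep2 : r ^ m ≤ (c k / δ) ^ α := by
    have key : r ^ m = (((1:ℝ)/θ) ^ m) ^ α := by
      rw [← hrα, ← Real.rpow_natCast (((1:ℝ)/θ) ^ α) m, ← Real.rpow_mul (by positivity),
        mul_comm, Real.rpow_mul (by positivity), Real.rpow_natCast]
    rw [key]
    exact Real.rpow_le_rpow (by positivity) hinv hα0
  -- step 3 : c k * P^β ≤ B'
  have hstep3 : c k * P ^ β ≤ B' := by
    have hmem : c k * ∏ n ∈ k.support, τ' n ^ k n ≤ B :=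
      hB ⟨k, hk, rfl⟩
    have hprod : (∏ n ∈ k.support, τ' n ^ k n) = P ^ β := by
      rw [hPdef, ← Real.finset_prod_rpow _ _ (fun n _ => pow_nonneg (hτ0 n) _) β]
      refine Finset.prod_congr rfl fun n _ => ?_
      rw [hτ'def]
      rw [← Real.rpow_natCast (τ n ^ β) (k n), ← Real.rpow_mul (hτ0 n),
        mul_comm, Real.rpow_mul (hτ0 n), Real.rpow_natCast]
    rw [← hprod]
    exact le_trans hmem (le_max_left _ _)
  -- step 4 : c k ^ (1+α) * P ≤ B' ^ (1+α)
  have hstep4 : c k ^ (1+α) * P ≤ B' ^ (1+α) := by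
    have h := Real.rpow_le_rpow (by positivity) hstep3 h1α.le
    rwa [Real.mul_rpow hck.le (Real.rpow_nonneg hP0 β), ← Real.rpow_mul hP0,
      hβdef, one_div_mul_cancel h1α.ne', Real.rpow_one] at h
  -- combine
  calc c k * ∏ n ∈ k.support, σ n ^ k n
      = c k * P * r ^ m := by rw [hstep1, mul_assoc]
    _ ≤ c k * P * (c k / δ) ^ α := by
        apply mul_le_mul_of_nonneg_left hstep2 (by positivity)
    _ = (1/δ) ^ α * (c k ^ (1+α) * P) := by
        rw [Real.div_rpow hck.le hδ0.le, Real.rpow_add hck 1 α, Real.rpow_one,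
          Real.div_rpow zero_le_one hδ0.le, Real.one_rpow]
        ring
    _ ≤ (1/δ) ^ α * B' ^ (1+α) := by
        apply mul_le_mul_of_nonneg_left hstep4 (by positivity)
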